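/- Let r be a positive integer and let f be a multivariate polynomial over ℂ in variables x_0, …, x_n that is irreducible (prime) and not associated to any variable x_i. Let F be a finite set of polynomials forming a complete set of pairwise non-associated representatives of the orbit {τ·f : τ an r-th root-of-unity tuple} (every element of F is of the form τ·f, distinct elements of F are non-associated, and every τ·f is associated to some element of F). Let p be any polynomial such that substituting x_i ↦ x_i^r into p yields ∏_{h ∈ F} h. Then ψ_r '' {x : Fin (n+1) → ℂ | f(x) = 0} = {y : Fin (n+1) → ℂ | p(y) = 0}. (The coordinate-wise r-th power of the hypersurface V(f) is the hypersurface defined by the polynomial obtained from the orbit product sym_r(f) by replacing each x_i^r with x_i.) -/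
import Mathlib


open MvPolynomial

lemma eval_aeval_comp {n : ℕ} (x : Fin (n + 1) → ℂ)
    (g : Fin (n + 1) → MvPolynomial (Fin (n + 1)) ℂ) (q : MvPolynomial (Fin (n + 1)) ℂ) :
    eval x (aeval g q) = eval (fun i => eval x (g i)) q := by
  have h1 : eval x (aeval g q) = aeval x (bind₁ g q) := by
    rw [← coe_aeval_eq_eval]; rfl
  rw [h1, aeval_bind₁, ← coe_aeval_eq_eval]
  rfl

/-- The coordinate-wise `r`-th power of the hypersurface `V(f)` (for `f` irreducible and
not associated to a variable) is the hypersurface defined by the polynomial `p`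
obtained from the orbit product `sym_r(f) = ∏_{h ∈ F} h` by replacing each `x_i^r`
by `x_i`. -/
theorem coordinatewise_power_hypersurface (r n : ℕ) (hr : 0 < r)
    (f : MvPolynomial (Fin (n + 1)) ℂ) (hf : Prime f)
    (hfx : ∀ i, ¬ Associated f (X i))
    (F : Finset (MvPolynomial (Fin (n + 1)) ℂ))
    (hF1 : ∀ h ∈ F, ∃ τ : Fin (n + 1) → ℂ, (∀ i, (τ i) ^ r = 1) ∧
        h = aeval (fun i => τ i • (X i : MvPolynomial (Fin (n + 1)) ℂ)) f)
    (hF2 : ∀ h₁ ∈ F, ∀ h₂ ∈ F, h₁ ≠ h₂ → ¬ Associated h₁ h₂)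
    (hF3 : ∀ τ : Fin (n + 1) → ℂ, (∀ i, (τ i) ^ r = 1) →
        ∃ h ∈ F, Associated (aeval (fun i => τ i • (X i : MvPolynomial (Fin (n + 1)) ℂ)) f) h)
    (p : MvPolynomial (Fin (n + 1)) ℂ)
    (hp : aeval (fun i => (X i : MvPolynomial (Fin (n + 1)) ℂ) ^ r) p = ∏ h ∈ F, h) :
    (fun x : Fin (n + 1) → ℂ => fun i => (x i) ^ r) '' {x | eval x f = 0}
      = {y : Fin (n + 1) → ℂ | eval y p = 0} := by
  ext y
  constructor
  · rintro ⟨x, hx, rfl⟩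
    have hx : eval x f = 0 := hx
    obtain ⟨h, hhF, hassoc⟩ := hF3 1 (fun i => one_pow r)
    have hf1 : aeval (fun i => (1 : Fin (n + 1) → ℂ) i • (X i : MvPolynomial (Fin (n + 1)) ℂ)) f
        = f := by
      simp only [Pi.one_apply, one_smul]
      exact aeval_X_left_apply f
    rw [hf1] at hassoc
    obtain ⟨u, hu⟩ := hassoc
    show eval (fun i => x i ^ r) p = 0
    have key : eval x (aeval (fun i => (X i : MvPolynomial (Fin (n + 1)) ℂ) ^ r) p)
        = eval (fun i => x i ^ r) p := by
      rw [eval_aeval_comp]; simp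
    rw [← key, hp, map_prod]
    apply Finset.prod_eq_zero hhF
    rw [← hu]
    simp [hx]
  · intro hy
    have hy : eval y p = 0 := hy
    choose x₀ hx₀ using fun i => IsAlgClosed.exists_pow_nat_eq (y i) hr
    have hprod : eval x₀ (∏ h ∈ F, h) = 0 := by
      rw [← hp, eval_aeval_comp]
      simp only [eval_pow, eval_X, hx₀]
      exact hy
    rw [map_prod, Finset.prod_eq_zero_iff] at hprod
    obtain ⟨h, hhF, hh0⟩ := hprod
    obtain ⟨τ, hτ, rfl⟩ := hF1 h hhF
    rw [eval_aeval_comp] at hh0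
    refine ⟨fun i => τ i * x₀ i, ?_, ?_⟩
    · show eval _ f = 0
      convert hh0 using 3 with i
      simp [mul_comm]
    · funext i
      simp [mul_pow, hτ i, hx₀ i]
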